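/- arXiv:0902.1058 — 2 statements merged into one kernel-verified Lean document; each statement's English description precedes it below -/
import Mathlib

section
/- Let f_1,...,f_n and g_1,...,g_n be integrable functions on ℝ such that each product f_j·g_k is integrable, and let M be the n×n matrix with entries m_{j,k} = ∫ f_j(x) g_k(x) dx. Then det M = (1/n!) ∫...∫ det[f_j(x_k)]_{j,k=1..n} · det[g_j(x_k)]_{j,k=1..n} dx_1...dx_n (generalized Cauchy–Binet / Andréief identity). -/
open MeasureTheory

/-- Andréief / generalized Cauchy–Binet identity: the determinant of the matrix of
cross-integrals `∫ f_j g_k` equals `1/n!` times the multiple integral over `ℝ^n` of the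
product of the two determinants `det[f_j(x_k)]` and `det[g_j(x_k)]`. -/
theorem andreief_identity (n : ℕ) (f g : Fin n → ℝ → ℝ)
    (hfg : ∀ j k : Fin n, Integrable (fun x : ℝ => f j x * g k x)) :
    Matrix.det (Matrix.of fun j k : Fin n => ∫ x : ℝ, f j x * g k x) =
      (1 / (Nat.factorial n : ℝ)) *
        ∫ x : Fin n → ℝ,
          Matrix.det (Matrix.of fun j k : Fin n => f j (x k)) *
          Matrix.det (Matrix.of fun j k : Fin n => g j (x k)) := by
  set M : Matrix (Fin n) (Fin n) ℝ := Matrix.of fun j k => ∫ x : ℝ, f j x * g k x with hM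
  have expand : ∀ x : Fin n → ℝ,
      Matrix.det (Matrix.of fun j k : Fin n => f j (x k)) *
      Matrix.det (Matrix.of fun j k : Fin n => g j (x k)) =
      ∑ σ : Equiv.Perm (Fin n), ∑ τ : Equiv.Perm (Fin n),
        (((Equiv.Perm.sign σ : ℤ) : ℝ) * ((Equiv.Perm.sign τ : ℤ) : ℝ)) *
          ∏ k, (f (σ k) (x k) * g (τ k) (x k)) := by
    intro x
    rw [Matrix.det_apply', Matrix.det_apply', Finset.sum_mul_sum]
    refine Finset.sum_congr rfl fun σ _ => Finset.sum_congr rfl fun τ _ => ?_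
    rw [Finset.prod_mul_distrib]
    simp only [Matrix.of_apply]
    ring
  have key : (∫ x : Fin n → ℝ,
      Matrix.det (Matrix.of fun j k : Fin n => f j (x k)) *
      Matrix.det (Matrix.of fun j k : Fin n => g j (x k)))
      = (n.factorial : ℝ) * M.det := by
    calc (∫ x : Fin n → ℝ,
        Matrix.det (Matrix.of fun j k : Fin n => f j (x k)) *
        Matrix.det (Matrix.of fun j k : Fin n => g j (x k)))
        = ∑ σ : Equiv.Perm (Fin n), ∑ τ : Equiv.Perm (Fin n),
          (((Equiv.Perm.sign σ : ℤ) : ℝ) * ((Equiv.Perm.sign τ : ℤ) : ℝ)) *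
            ∏ k, M (σ k) (τ k) := by
          simp_rw [expand]
          rw [integral_finset_sum]
          · refine Finset.sum_congr rfl fun σ _ => ?_
            rw [integral_finset_sum]
            · refine Finset.sum_congr rfl fun τ _ => ?_
              rw [integral_const_mul, MeasureTheory.integral_fintype_prod_volume_eq_prod
                (ι := Fin n) (fun k x => f (σ k) x * g (τ k) x)]
              rfl
            · intro τ _
              exact (Integrable.fintype_prod (fun k => hfg (σ k) (τ k))).const_mul _
          · intro σ _
            refine integrable_finset_sum _ fun τ _ => ?_
            exact (Integrable.fintype_prod (fun k => hfg (σ k) (τ k))).const_mul _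
      _ = ∑ σ : Equiv.Perm (Fin n), M.det := by
          refine Finset.sum_congr rfl fun σ _ => ?_
          rw [← Equiv.sum_comp (Equiv.mulRight σ)
            (fun τ => (((Equiv.Perm.sign σ : ℤ) : ℝ) * ((Equiv.Perm.sign τ : ℤ) : ℝ)) *
              ∏ k, M (σ k) (τ k))]
          have hdet : M.det = ∑ ρ : Equiv.Perm (Fin n),
              ((Equiv.Perm.sign ρ : ℤ) : ℝ) * ∏ k, M k (ρ k) := by
            rw [← Matrix.det_transpose M, Matrix.det_apply']
            rfl
          rw [hdet]
          refine Finset.sum_congr rfl fun ρ _ => ?_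
          have hsign : ((Equiv.Perm.sign ((Equiv.mulRight σ) ρ) : ℤ) : ℝ)
              = ((Equiv.Perm.sign ρ : ℤ) : ℝ) * ((Equiv.Perm.sign σ : ℤ) : ℝ) := by
            simp [Equiv.Perm.sign_mul]
          have hprod : (∏ k, M (σ k) (((Equiv.mulRight σ) ρ) k))
              = ∏ k, M k (ρ k) := by
            simp only [Equiv.coe_mulRight, Equiv.Perm.mul_apply]
            exact Equiv.prod_comp σ (fun k => M k (ρ k))
          rw [hprod, hsign]
          have hs2 : ((Equiv.Perm.sign σ : ℤ) : ℝ) * ((Equiv.Perm.sign σ : ℤ) : ℝ) = 1 := by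
            rw [← Int.cast_mul]; simp [Int.units_mul_self]
          calc (((Equiv.Perm.sign σ : ℤ) : ℝ) *
                (((Equiv.Perm.sign ρ : ℤ) : ℝ) * ((Equiv.Perm.sign σ : ℤ) : ℝ))) *
                ∏ k, M k (ρ k)
              = (((Equiv.Perm.sign σ : ℤ) : ℝ) * ((Equiv.Perm.sign σ : ℤ) : ℝ)) *
                (((Equiv.Perm.sign ρ : ℤ) : ℝ) * ∏ k, M k (ρ k)) := by ring
            _ = ((Equiv.Perm.sign ρ : ℤ) : ℝ) * ∏ k, M k (ρ k) := by rw [hs2, one_mul]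
      _ = (n.factorial : ℝ) * M.det := by
          rw [Finset.sum_const, Finset.card_univ, Fintype.card_perm, Fintype.card_fin,
            nsmul_eq_mul]
  rw [key]
  field_simp
end

section
/- Let g_1,...,g_n : ℝ → ℝ be integrable functions such that D_n := det[∫ x^{j-1} g_k(x) dx]_{j,k=1..n} ≠ 0. Then the function P(z) := (1/(D_n · n!)) ∫_{ℝ^n} ∏_{k=1}^n (z - x_k) · det[x_k^{j-1}]_{j,k} · det[g_j(x_k)]_{j,k} dx_1⋯dx_n is a monic polynomial of degree n in z satisfying the orthogonality conditions ∫ P(x) g_k(x) dx = 0 for k = 1,...,n. -/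
open MeasureTheory Polynomial

lemma andreief_aux {n : ℕ} (F G : Fin n → ℝ → ℝ)
    (hFG : ∀ j k, Integrable (fun x : ℝ => F j x * G k x)) :
    (∫ x : Fin n → ℝ, Matrix.det (Matrix.of fun j k => F j (x k)) *
        Matrix.det (Matrix.of fun j k => G j (x k))) =
      (n.factorial : ℝ) * Matrix.det (Matrix.of fun j k => ∫ x : ℝ, F j x * G k x) := by
  classical
  set c : Fin n → Fin n → ℝ := fun j k => ∫ x : ℝ, F j x * G k x with hc
  have step1 : ∀ x : Fin n → ℝ,
      Matrix.det (Matrix.of fun j k => F j (x k)) * Matrix.det (Matrix.of fun j k => G j (x k)) =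
      ∑ σ : Equiv.Perm (Fin n), ∑ τ : Equiv.Perm (Fin n),
        (((Equiv.Perm.sign σ : ℤ) : ℝ) * ((Equiv.Perm.sign τ : ℤ) : ℝ)) *
          ∏ k, F (σ k) (x k) * G (τ k) (x k) := by
    intro x
    rw [Matrix.det_apply', Matrix.det_apply', Finset.sum_mul_sum]
    refine Finset.sum_congr rfl fun σ _ => Finset.sum_congr rfl fun τ _ => ?_
    rw [Finset.prod_mul_distrib]
    simp only [Matrix.of_apply]
    ring
  have hint1 : ∀ σ τ : Equiv.Perm (Fin n),
      Integrable (fun x : Fin n → ℝ => ∏ k, F (σ k) (x k) * G (τ k) (x k)) :=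
    fun σ τ => Integrable.fintype_prod (f := fun k x => F (σ k) x * G (τ k) x)
      (fun k => hFG _ _)
  have hint2 : ∀ σ τ : Equiv.Perm (Fin n),
      Integrable (fun x : Fin n → ℝ =>
        (((Equiv.Perm.sign σ : ℤ) : ℝ) * ((Equiv.Perm.sign τ : ℤ) : ℝ)) *
          ∏ k, F (σ k) (x k) * G (τ k) (x k)) :=
    fun σ τ => (hint1 σ τ).const_mul _
  have step2 : (∫ x : Fin n → ℝ, Matrix.det (Matrix.of fun j k => F j (x k)) *
        Matrix.det (Matrix.of fun j k => G j (x k))) =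
      ∑ σ : Equiv.Perm (Fin n), ∑ τ : Equiv.Perm (Fin n),
        (((Equiv.Perm.sign σ : ℤ) : ℝ) * ((Equiv.Perm.sign τ : ℤ) : ℝ)) *
          ∏ k, c (σ k) (τ k) := by
    simp_rw [step1]
    rw [integral_finset_sum _
      (fun σ _ => integrable_finset_sum _ (fun τ _ => hint2 σ τ))]
    refine Finset.sum_congr rfl fun σ _ => ?_
    rw [integral_finset_sum _ (fun τ _ => hint2 σ τ)]
    refine Finset.sum_congr rfl fun τ _ => ?_
    rw [MeasureTheory.integral_const_mul, MeasureTheory.volume_pi,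
      MeasureTheory.integral_fintype_prod_eq_prod (ι := Fin n)
        (fun k x => F (σ k) x * G (τ k) x)]
  rw [step2]
  have key : ∀ σ : Equiv.Perm (Fin n),
      (∑ τ : Equiv.Perm (Fin n),
        (((Equiv.Perm.sign σ : ℤ) : ℝ) * ((Equiv.Perm.sign τ : ℤ) : ℝ)) *
          ∏ k, c (σ k) (τ k)) = Matrix.det (Matrix.of c) := by
    intro σ
    have hσ2 : ((Equiv.Perm.sign σ : ℤ) : ℝ) * ((Equiv.Perm.sign σ : ℤ) : ℝ) = 1 := by
      rcases Int.units_eq_one_or (Equiv.Perm.sign σ) with h | h <;> simp [h]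
    rw [← Equiv.sum_comp (Equiv.mulRight σ)
      (fun τ => (((Equiv.Perm.sign σ : ℤ) : ℝ) * ((Equiv.Perm.sign τ : ℤ) : ℝ)) *
          ∏ k, c (σ k) (τ k))]
    have : ∀ ρ : Equiv.Perm (Fin n),
        (((Equiv.Perm.sign σ : ℤ) : ℝ) *
          ((Equiv.Perm.sign ((Equiv.mulRight σ) ρ) : ℤ) : ℝ)) *
          ∏ k, c (σ k) (((Equiv.mulRight σ) ρ) k) =
        ((Equiv.Perm.sign ρ : ℤ) : ℝ) * ∏ i, c i (ρ i) := by
      intro ρ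
      have h1 : ∀ k, ((Equiv.mulRight σ) ρ) k = ρ (σ k) := fun k => rfl
      have h2 : (∏ k, c (σ k) (ρ (σ k))) = ∏ i, c i (ρ i) :=
        Equiv.prod_comp σ (fun i => c i (ρ i))
      have h3 : (Equiv.mulRight σ) ρ = ρ * σ := rfl
      have h4 : ((Equiv.Perm.sign ((Equiv.mulRight σ) ρ) : ℤ) : ℝ) =
          ((Equiv.Perm.sign ρ : ℤ) : ℝ) * ((Equiv.Perm.sign σ : ℤ) : ℝ) := by
        rw [h3, Equiv.Perm.sign_mul]; push_cast; ring
      simp only [h1, h2, h4]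
      rw [show ((Equiv.Perm.sign σ : ℤ) : ℝ) *
          (((Equiv.Perm.sign ρ : ℤ) : ℝ) * ((Equiv.Perm.sign σ : ℤ) : ℝ)) =
          ((Equiv.Perm.sign ρ : ℤ) : ℝ) *
          (((Equiv.Perm.sign σ : ℤ) : ℝ) * ((Equiv.Perm.sign σ : ℤ) : ℝ)) by ring,
        hσ2, mul_one]
    rw [Finset.sum_congr rfl (fun ρ _ => this ρ)]
    rw [← Matrix.det_transpose (Matrix.of c), Matrix.det_apply']
    rfl
  rw [Finset.sum_congr rfl (fun σ _ => key σ)]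
  rw [Finset.sum_const, Finset.card_univ, Fintype.card_perm, Fintype.card_fin,
    nsmul_eq_mul]

/-- The multiple integral representation
`P(z) = (1/(D_n n!)) ∫_{ℝ^n} ∏_k (z - x_k) · det[x_k^{j-1}] · det[g_j(x_k)] dx`
defines a monic polynomial of degree `n` satisfying the orthogonality conditions
`∫ P(x) g_k(x) dx = 0` for all `k`. -/
theorem mop_multiple_integral_is_monic_orthogonal (n : ℕ) (g : Fin n → ℝ → ℝ)
    (hint : ∀ (k : Fin n) (m : ℕ), m ≤ n → Integrable (fun x : ℝ => x ^ m * g k x))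
    (habs : ∀ z : ℝ, Integrable (fun x : Fin n → ℝ =>
      (∏ k : Fin n, (z - x k)) *
        (Matrix.det (Matrix.of fun j k : Fin n => (x k) ^ (j : ℕ)) *
         Matrix.det (Matrix.of fun j k : Fin n => g j (x k)))))
    (D : ℝ) (hD : D = Matrix.det (Matrix.of fun j k : Fin n => ∫ x : ℝ, x ^ (j : ℕ) * g k x))
    (hD0 : D ≠ 0)
    (P : ℝ → ℝ)
    (hP : P = fun z : ℝ =>
      (1 / (D * (Nat.factorial n : ℝ))) *
        ∫ x : Fin n → ℝ,
          (∏ k : Fin n, (z - x k)) *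
            (Matrix.det (Matrix.of fun j k : Fin n => (x k) ^ (j : ℕ)) *
             Matrix.det (Matrix.of fun j k : Fin n => g j (x k)))) :
    ∃ Q : Polynomial ℝ, Q.Monic ∧ Q.natDegree = n ∧ (∀ z : ℝ, P z = Q.eval z) ∧
      ∀ k : Fin n, ∫ x : ℝ, Q.eval x * g k x = 0 := by
  classical
  set A : Matrix (Fin n) (Fin n) ℝ :=
    Matrix.of fun j k : Fin n => ∫ x : ℝ, x ^ (j : ℕ) * g k x with hA
  set Bm : Matrix (Fin n) (Fin n) ℝ :=
    Matrix.of fun j k : Fin n => ∫ x : ℝ, x ^ ((j : ℕ) + 1) * g k x with hBm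
  have hDA : D = A.det := hD
  have hDu : IsUnit A.det := by rw [← hDA]; exact hD0.isUnit
  set M : Matrix (Fin n) (Fin n) ℝ := A⁻¹ * Bm with hMdef
  have hAM : A * M = Bm := Matrix.mul_nonsing_inv_cancel_left A Bm hDu
  have hdeg : M.charpoly.natDegree = n := by simp
  have heval : ∀ z : ℝ, M.charpoly.eval z =
      (z • (1 : Matrix (Fin n) (Fin n) ℝ) - M).det := by
    intro z
    rw [Matrix.charpoly, ← Polynomial.coe_evalRingHom, RingHom.map_det]
    congr 1
    ext i j
    by_cases h : i = j <;>
      simp [Matrix.charmatrix_apply, Matrix.map_apply, h, Matrix.one_apply,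
        Matrix.sub_apply, Matrix.smul_apply, Matrix.diagonal]
  have hdet : ∀ z : ℝ, (z • A - Bm).det =
      A.det * (z • (1 : Matrix (Fin n) (Fin n) ℝ) - M).det := by
    intro z
    rw [← Matrix.det_mul]
    congr 1
    rw [Matrix.mul_sub, hAM, Matrix.mul_smul, Matrix.mul_one]
  refine ⟨M.charpoly, M.charpoly_monic, hdeg, ?_, ?_⟩
  · -- eval representation
    intro z
    have hI : ∀ j k : Fin n,
        Integrable (fun x : ℝ => ((z - x) * x ^ (j : ℕ)) * g k x) := by
      intro j k
      have h1 := (hint k (j : ℕ) (le_of_lt j.isLt)).const_mul z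
      have h2 := hint k ((j : ℕ) + 1) j.isLt
      exact (h1.sub h2).congr (Filter.Eventually.of_forall fun x => by simp only [Pi.sub_apply]; ring)
    have hmom : ∀ j k : Fin n,
        (∫ x : ℝ, ((z - x) * x ^ (j : ℕ)) * g k x) = z * A j k - Bm j k := by
      intro j k
      have hfun : (fun x : ℝ => ((z - x) * x ^ (j : ℕ)) * g k x) =
          fun x : ℝ => z * (x ^ (j : ℕ) * g k x) - x ^ ((j : ℕ) + 1) * g k x := by
        funext x; ring
      rw [hfun, integral_sub ((hint k _ (le_of_lt j.isLt)).const_mul z) (hint k _ j.isLt),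
        MeasureTheory.integral_const_mul]
      rfl
    have hdet2 : ∀ x : Fin n → ℝ,
        Matrix.det (Matrix.of fun j k : Fin n => (z - x k) * (x k) ^ (j : ℕ)) =
          (∏ k : Fin n, (z - x k)) *
            Matrix.det (Matrix.of fun j k : Fin n => (x k) ^ (j : ℕ)) :=
      fun x => Matrix.det_mul_row _ _
    have hand := andreief_aux (fun j t => (z - t) * t ^ (j : ℕ)) g (fun j k => hI j k)
    have hmm : (Matrix.of fun j k : Fin n =>
        ∫ x : ℝ, ((z - x) * x ^ (j : ℕ)) * g k x) = z • A - Bm := by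
      ext j k
      simp only [Matrix.of_apply, Matrix.sub_apply, Matrix.smul_apply, smul_eq_mul]
      exact hmom j k
    have heqI : (∫ x : Fin n → ℝ,
        (∏ k : Fin n, (z - x k)) *
          (Matrix.det (Matrix.of fun j k : Fin n => (x k) ^ (j : ℕ)) *
           Matrix.det (Matrix.of fun j k : Fin n => g j (x k)))) =
        (n.factorial : ℝ) * (z • A - Bm).det := by
      rw [← hmm, ← hand]
      refine integral_congr_ae (Filter.Eventually.of_forall fun x => ?_)
      beta_reduce
      rw [hdet2 x]; ring
    have hfac : (n.factorial : ℝ) ≠ 0 := Nat.cast_ne_zero.mpr (Nat.factorial_ne_zero n)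
    rw [hP]
    simp only
    rw [heqI, hdet z, heval z, ← hDA]
    field_simp
  · -- orthogonality
    intro k
    set v : Fin n → ℝ := fun i => ∫ x : ℝ, x ^ (0 : ℕ) * g i x with hv
    have hpow : ∀ m : ℕ, m ≤ n → ∀ l : Fin n,
        (∫ x : ℝ, x ^ m * g l x) = Matrix.vecMul v (M ^ m) l := by
      intro m
      induction m with
      | zero => intro _ l; rw [pow_zero, Matrix.vecMul_one]
      | succ m ih =>
        intro hm l
        have hmn : m < n := lt_of_lt_of_le (Nat.lt_succ_self m) hm
        have hBl : (∫ x : ℝ, x ^ (m + 1) * g l x) = (A * M) ⟨m, hmn⟩ l := by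
          rw [hAM]; rfl
        rw [hBl, Matrix.mul_apply]
        calc ∑ i, A ⟨m, hmn⟩ i * M i l
            = ∑ i, (Matrix.vecMul v (M ^ m)) i * M i l := by
              refine Finset.sum_congr rfl fun i _ => ?_
              rw [show A ⟨m, hmn⟩ i = ∫ x : ℝ, x ^ m * g i x from rfl,
                ih (le_of_lt hmn) i]
          _ = Matrix.vecMul (Matrix.vecMul v (M ^ m)) M l := by
              simp [Matrix.vecMul, dotProduct]
          _ = Matrix.vecMul v (M ^ (m + 1)) l := by
              rw [Matrix.vecMul_vecMul, ← pow_succ]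
    have hevals : ∀ x : ℝ, M.charpoly.eval x =
        ∑ m ∈ Finset.range (n + 1), M.charpoly.coeff m * x ^ m := by
      intro x
      conv_lhs => rw [Polynomial.eval_eq_sum_range]
      rw [hdeg]
    have hIk : (∫ x : ℝ, M.charpoly.eval x * g k x) =
        ∑ m ∈ Finset.range (n + 1), M.charpoly.coeff m * ∫ x : ℝ, x ^ m * g k x := by
      have hfun : (fun x : ℝ => M.charpoly.eval x * g k x) =
          fun x : ℝ => ∑ m ∈ Finset.range (n + 1),
            M.charpoly.coeff m * (x ^ m * g k x) := by
        funext x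
        rw [hevals x, Finset.sum_mul]
        exact Finset.sum_congr rfl fun m _ => by ring
      rw [hfun, integral_finset_sum _ (fun m hm =>
        (hint k m (Nat.lt_succ_iff.mp (Finset.mem_range.mp hm))).const_mul _)]
      exact Finset.sum_congr rfl fun m _ => MeasureTheory.integral_const_mul _ _
    have hCH : (∑ m ∈ Finset.range (n + 1), M.charpoly.coeff m • M ^ m) = 0 := by
      have h := Matrix.aeval_self_charpoly M
      rw [Polynomial.aeval_eq_sum_range, hdeg] at h
      exact h
    rw [hIk]
    calc ∑ m ∈ Finset.range (n + 1), M.charpoly.coeff m * ∫ x : ℝ, x ^ m * g k x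
        = ∑ m ∈ Finset.range (n + 1),
            M.charpoly.coeff m * Matrix.vecMul v (M ^ m) k :=
          Finset.sum_congr rfl fun m hm => by
            rw [hpow m (Nat.lt_succ_iff.mp (Finset.mem_range.mp hm)) k]
      _ = ∑ m ∈ Finset.range (n + 1), ∑ i,
            M.charpoly.coeff m * (v i * (M ^ m) i k) := by
          refine Finset.sum_congr rfl fun m _ => ?_
          simp [Matrix.vecMul, dotProduct, Finset.mul_sum]
      _ = ∑ i, ∑ m ∈ Finset.range (n + 1),
            M.charpoly.coeff m * (v i * (M ^ m) i k) := Finset.sum_comm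
      _ = Matrix.vecMul v (∑ m ∈ Finset.range (n + 1),
            M.charpoly.coeff m • M ^ m) k := by
          simp only [Matrix.vecMul, dotProduct, Matrix.sum_apply,
            Matrix.smul_apply, smul_eq_mul, Finset.mul_sum]
          exact Finset.sum_congr rfl fun i _ => Finset.sum_congr rfl fun m _ => by ring
      _ = 0 := by rw [hCH]; simp [Matrix.vecMul]
end
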